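/- arXiv:1801.01699 — 2 statements merged into one kernel-verified Lean document; each statement's English description precedes it below -/
import Mathlib

section
/- Let A be a finite set, P a probability distribution on a finite set X with support contained in A's ambient set, let M ≥ 1 be an integer, c ≥ P(A) a real constant, and suppose P(x) ≤ c·δ/M for all x ∈ A, where 0 < δ < 1. Then there exists a function φ: A → {1,...,M} such that (1/2)·Σ_{i=1}^{M} |P(φ⁻¹(i)) − c/M| ≤ c·δ + (1/2)(c − P(A)). -/
lemma aux_lower_eq_range (F : Finset ℕ)
    (h : ∀ j k : ℕ, j ≤ k → k ∈ F → j ∈ F) : F = Finset.range F.card := by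
  ext k
  simp only [Finset.mem_range]
  constructor
  · intro hk
    have hsub : Finset.range (k + 1) ⊆ F := fun j hj =>
      h j k (Nat.lt_succ_iff.mp (Finset.mem_range.mp hj)) hk
    have := Finset.card_le_card hsub
    simp only [Finset.card_range] at this
    omega
  · intro hk
    by_contra hkF
    have hsub : F ⊆ Finset.range k := by
      intro j hj
      simp only [Finset.mem_range]
      by_contra hjk
      exact hkF (h k j (by omega) hj)
    have := Finset.card_le_card hsub
    simp only [Finset.card_range] at this
    omega

/-- Lemma 1 of the paper: existence of a mapping into `Fin M` whose pushforward of `P`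
restricted to `A` is close to the scaled uniform distribution. -/
theorem stmt_0 {X : Type*} [Fintype X] (P : X → ℝ) (A : Finset X)
    (hP0 : ∀ x, 0 ≤ P x) (hP1 : ∑ x, P x = 1)
    (M : ℕ) (hM : 1 ≤ M) (c δ : ℝ) (hδ0 : 0 < δ) (hδ1 : δ < 1)
    (hc : ∑ x ∈ A, P x ≤ c)
    (hbd : ∀ x ∈ A, P x ≤ c * δ / M) :
    ∃ φ : X → Fin M,
      (1 / 2) * ∑ i : Fin M,
          |(∑ x ∈ A.filter (fun x => φ x = i), P x) - c / M|
        ≤ c * δ + (1 / 2) * (c - ∑ x ∈ A, P x) := by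
  classical
  have hMR : (0:ℝ) < M := by exact_mod_cast Nat.lt_of_lt_of_le Nat.zero_lt_one hM
  have hS0 : 0 ≤ ∑ x ∈ A, P x := Finset.sum_nonneg fun x _ => hP0 x
  have hc0 : 0 ≤ c := hS0.trans hc
  set n := A.card with hn
  set μ : ℝ := c * δ / M with hμdef
  have hμ0 : 0 ≤ μ := by positivity
  set e := A.equivFin with he
  set q : ℕ → ℝ := fun k => if h : k < n then P ((e.symm ⟨k, h⟩ : A) : X) else 0 with hqdef
  have hq0 : ∀ k, 0 ≤ q k := by
    intro k
    simp only [hqdef]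
    split
    · exact hP0 _
    · exact le_rfl
  have hqμ : ∀ k, q k ≤ μ := by
    intro k
    simp only [hqdef]
    split
    · exact hbd _ (e.symm ⟨k, ‹_›⟩).2
    · exact hμ0
  set s : ℕ → ℝ := fun k => ∑ j ∈ Finset.range k, q j with hsdef
  have hs_mono : Monotone s := fun a b hab =>
    Finset.sum_le_sum_of_subset_of_nonneg (Finset.range_subset_range.mpr hab)
      (fun i _ _ => hq0 i)
  have hs0 : ∀ k, 0 ≤ s k := fun k => Finset.sum_nonneg fun j _ => hq0 j
  have hsn : s n = ∑ x ∈ A, P x := by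
    simp only [hsdef]
    rw [← Fin.sum_univ_eq_sum_range]
    rw [Fintype.sum_equiv e.symm _ (fun a : A => P (a : X))]
    · exact Finset.sum_coe_sort A P
    · intro j
      simp only [hqdef, show (j:ℕ) < n from j.isLt, dif_pos, Fin.eta]
  set t : ℕ → ℝ := fun j => j * (c / M) with htdef
  have ht_mono : Monotone t := fun a b hab =>
    mul_le_mul_of_nonneg_right (Nat.cast_le.mpr hab) (by positivity)
  have ht0 : ∀ j, 0 ≤ t j := fun j => by simp only [htdef]; positivity
  set f : ℕ → ℕ := fun j => if M ≤ j then n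
      else ((Finset.range n).filter (fun k => s k < t j)).card with hfdef
  have hfil : ∀ j, ¬ M ≤ j →
      (Finset.range n).filter (fun k => s k < t j) = Finset.range (f j) := by
    intro j hj
    simp only [hfdef, if_neg hj]
    apply aux_lower_eq_range
    intro a b hab hb
    simp only [Finset.mem_filter, Finset.mem_range] at hb ⊢
    exact ⟨lt_of_le_of_lt hab hb.1, lt_of_le_of_lt (hs_mono hab) hb.2⟩
  have hf_le : ∀ j, f j ≤ n := by
    intro j
    simp only [hfdef]
    split
    · exact le_rfl
    · exact (Finset.card_filter_le _ _).trans (by simp)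
  have hf_mono : Monotone f := by
    intro a b hab
    by_cases hb : M ≤ b
    · simp only [hfdef, if_pos hb]
      exact hf_le a
    · have ha : ¬ M ≤ a := fun h => hb (h.trans hab)
      simp only [hfdef, if_neg ha, if_neg hb]
      apply Finset.card_le_card
      intro k hk
      simp only [Finset.mem_filter, Finset.mem_range] at hk ⊢
      exact ⟨hk.1, hk.2.trans_le (ht_mono hab)⟩
  have hf0 : f 0 = 0 := by
    simp only [hfdef, if_neg (by omega : ¬ M ≤ 0)]
    rw [Finset.card_eq_zero, Finset.filter_eq_empty_iff]
    intro k _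
    simp only [htdef, Nat.cast_zero, zero_mul, not_lt]
    exact hs0 k
  have hfM : f M = n := by simp only [hfdef, if_pos le_rfl]
  have hupper : ∀ j, s (f j) ≤ t j + μ := by
    intro j
    by_cases hj : M ≤ j
    · have : f j = n := by simp only [hfdef, if_pos hj]
      rw [this, hsn]
      have hct : c ≤ t j := by
        have : t M ≤ t j := ht_mono hj
        have htM : t M = c := by
          simp only [htdef]; field_simp
        linarith
      linarith
    · rcases Nat.eq_zero_or_pos (f j) with h0 | hpos
      · rw [h0]
        have : s 0 = 0 := by simp [hsdef]
        rw [this]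
        have := ht0 j
        linarith
      · obtain ⟨m, hm⟩ := Nat.exists_eq_succ_of_ne_zero (by omega : f j ≠ 0)
        have hmem : m ∈ (Finset.range n).filter (fun k => s k < t j) := by
          rw [hfil j hj, Finset.mem_range]; omega
        simp only [Finset.mem_filter, Finset.mem_range] at hmem
        have : s (f j) = s m + q m := by
          rw [hm]; simp only [hsdef]; rw [Finset.sum_range_succ]
        rw [this]
        have := hqμ m
        linarith [hmem.2]
  have hlower : ∀ j, j < M → f j < n → t j ≤ s (f j) := by
    intro j hj hfn
    have hnot : f j ∉ (Finset.range n).filter (fun k => s k < t j) := by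
      rw [hfil j (not_le.mpr hj)]
      simp
    simp only [Finset.mem_filter, Finset.mem_range, not_and, not_lt] at hnot
    exact hnot hfn
  -- the bin function
  set b : ℕ → ℕ := fun k => ((Finset.range M).filter (fun j => f (j+1) ≤ k)).card
    with hbdef
  have hbfil : ∀ k, (Finset.range M).filter (fun j => f (j+1) ≤ k)
      = Finset.range (b k) := by
    intro k
    apply aux_lower_eq_range
    intro a b' hab hb'
    simp only [Finset.mem_filter, Finset.mem_range] at hb' ⊢
    exact ⟨lt_of_le_of_lt hab hb'.1, le_trans (hf_mono (by omega)) hb'.2⟩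
  have hb_iff : ∀ k j, j < M → (j < b k ↔ f (j+1) ≤ k) := by
    intro k j hj
    constructor
    · intro h
      have : j ∈ Finset.range (b k) := Finset.mem_range.mpr h
      rw [← hbfil] at this
      exact (Finset.mem_filter.mp this).2
    · intro h
      have : j ∈ (Finset.range M).filter (fun j => f (j+1) ≤ k) :=
        Finset.mem_filter.mpr ⟨Finset.mem_range.mpr hj, h⟩
      rw [hbfil] at this
      exact Finset.mem_range.mp this
  have hb_lt : ∀ k, k < n → b k < M := by
    intro k hk
    by_contra hbk
    have h1 : M - 1 < b k := by omega
    have := (hb_iff k (M-1) (by omega)).mp h1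
    rw [(by omega : M - 1 + 1 = M), hfM] at this
    omega
  have hb_eq : ∀ k i, i < M → (b k = i ↔ f i ≤ k ∧ k < f (i+1)) := by
    intro k i hi
    have h1 : i < b k ↔ f (i+1) ≤ k := hb_iff k i hi
    rcases Nat.eq_zero_or_pos i with h0 | hipos
    · subst h0
      constructor
      · intro h
        refine ⟨by rw [hf0]; exact Nat.zero_le k, ?_⟩
        by_contra hcon
        have := h1.mpr (by omega)
        omega
      · rintro ⟨_, h2⟩
        have : ¬ 0 < b k := fun hh => absurd (h1.mp hh) (by omega)
        omega
    · have h2 : i - 1 < b k ↔ f i ≤ k := by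
        have := hb_iff k (i-1) (by omega)
        rwa [(by omega : i - 1 + 1 = i)] at this
      constructor
      · intro h
        refine ⟨h2.mp (by omega), ?_⟩
        by_contra hcon
        have := h1.mpr (by omega)
        omega
      · rintro ⟨ha, hb'⟩
        have hA : i - 1 < b k := h2.mpr ha
        have hB : ¬ i < b k := fun hh => absurd (h1.mp hh) (by omega)
        omega
  set φ : X → Fin M := fun x =>
    if h : x ∈ A then ⟨b ((e ⟨x, h⟩ : Fin n) : ℕ), hb_lt _ (e ⟨x, h⟩).isLt⟩
    else ⟨0, hM⟩ with hφdef
  refine ⟨φ, ?_⟩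
  have hQ : ∀ i : Fin M, ∑ x ∈ A.filter (fun x => φ x = i), P x
      = s (f ((i : ℕ) + 1)) - s (f (i : ℕ)) := by
    intro i
    have step1 : ∑ x ∈ A.filter (fun x => φ x = i), P x
        = ∑ k ∈ (Finset.range n).filter (fun k => b k = (i : ℕ)), q k := by
      rw [Finset.sum_filter, Finset.sum_filter]
      rw [← Finset.sum_coe_sort A (fun x => if φ x = i then P x else 0)]
      rw [← Fin.sum_univ_eq_sum_range (fun k => if b k = (i : ℕ) then q k else 0)]
      apply Fintype.sum_equiv e
      intro a
      have hmem : (a : X) ∈ A := a.2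
      have hφa : φ (a : X) = ⟨b ((e a : Fin n) : ℕ), hb_lt _ (e a).isLt⟩ := by
        simp only [hφdef, dif_pos hmem, Subtype.coe_eta]
      have hqa : q ((e a : Fin n) : ℕ) = P (a : X) := by
        simp only [hqdef]
        rw [dif_pos (e a).isLt]
        simp only [Fin.eta, Equiv.symm_apply_apply]
      rw [hφa, hqa]
      congr 1
      simp [Fin.ext_iff]
    have step2 : (Finset.range n).filter (fun k => b k = (i : ℕ))
        = Finset.Ico (f (i : ℕ)) (f ((i : ℕ) + 1)) := by
      ext k
      simp only [Finset.mem_filter, Finset.mem_range, Finset.mem_Ico]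
      constructor
      · rintro ⟨hk, hbk⟩
        exact (hb_eq k (i : ℕ) i.isLt).mp hbk
      · rintro ⟨h1, h2⟩
        have hkn : k < n := lt_of_lt_of_le h2 (hf_le _)
        exact ⟨hkn, (hb_eq k (i : ℕ) i.isLt).mpr ⟨h1, h2⟩⟩
    rw [step1, step2, Finset.sum_Ico_eq_sub _ (hf_mono (Nat.le_succ _))]
  have hxle : ∀ i : Fin M, s (f ((i : ℕ) + 1)) - s (f (i : ℕ)) - c / M ≤ μ := by
    intro i
    by_cases hfi : f (i : ℕ) < n
    · have hl := hlower (i : ℕ) i.isLt hfi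
      have hu := hupper ((i : ℕ) + 1)
      have hts : t ((i : ℕ) + 1) - t (i : ℕ) = c / M := by
        simp only [htdef]
        push_cast
        ring
      linarith
    · have hfin : f (i : ℕ) = n := le_antisymm (hf_le _) (not_lt.mp hfi)
      have hfin2 : f ((i : ℕ) + 1) = n :=
        le_antisymm (hf_le _) (hfin ▸ hf_mono (Nat.le_succ _))
      rw [hfin, hfin2]
      have hcm : (0:ℝ) ≤ c / M := by positivity
      linarith
  have habs : ∀ i : Fin M, |s (f ((i : ℕ) + 1)) - s (f (i : ℕ)) - c / M|
      ≤ 2 * μ - (s (f ((i : ℕ) + 1)) - s (f (i : ℕ)) - c / M) := by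
    intro i
    have := hxle i
    rcases abs_cases (s (f ((i : ℕ) + 1)) - s (f (i : ℕ)) - c / M) with ⟨h1, _⟩ | ⟨h1, _⟩ <;>
      linarith
  have hsumtele : ∑ i : Fin M, (s (f ((i : ℕ) + 1)) - s (f (i : ℕ))) = ∑ x ∈ A, P x := by
    rw [Fin.sum_univ_eq_sum_range (fun k => s (f (k + 1)) - s (f k)) M]
    rw [Finset.sum_range_sub (fun k => s (f k)) M]
    rw [hfM, hf0, hsn]
    simp [hsdef]
  have hconst : (M:ℝ) * (2 * μ + c / M) = 2 * (c * δ) + c := by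
    rw [hμdef]
    field_simp
  calc (1 / 2) * ∑ i : Fin M, |(∑ x ∈ A.filter (fun x => φ x = i), P x) - c / M|
      = (1 / 2) * ∑ i : Fin M, |s (f ((i : ℕ) + 1)) - s (f (i : ℕ)) - c / M| := by
        congr 1
        exact Finset.sum_congr rfl fun i _ => by rw [hQ i]
    _ ≤ (1 / 2) * ∑ i : Fin M, (2 * μ - (s (f ((i : ℕ) + 1)) - s (f (i : ℕ)) - c / M)) := by
        have := Finset.sum_le_sum fun i (_ : i ∈ Finset.univ) => habs i
        linarith
    _ = (1 / 2) * ((M:ℝ) * (2 * μ + c / M) - ∑ x ∈ A, P x) := by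
        have hre : ∀ i : Fin M, 2 * μ - (s (f ((i : ℕ) + 1)) - s (f (i : ℕ)) - c / M)
            = (2 * μ + c / M) - (s (f ((i : ℕ) + 1)) - s (f (i : ℕ))) := fun i => by ring
        rw [Finset.sum_congr rfl fun i _ => hre i, Finset.sum_sub_distrib, hsumtele,
          Finset.sum_const, Finset.card_univ, Fintype.card_fin, nsmul_eq_mul]
    _ ≤ c * δ + (1 / 2) * (c - ∑ x ∈ A, P x) := by
        rw [hconst]
        linarith
end

section
/- Let P be a probability distribution on a finite set X, let Q be a sub-probability distribution on X with Q(x) ≤ P(x) for all x, and suppose for a function φ: X → ⋃_m U^m (U a finite alphabet of size K) that Q(x) ≤ P(D_m)/K^m whenever φ(x) has length m, where D_m = {x : |φ(x)| = m}. Then Σ_x P(x)·log_K(1/Q(x)) ≥ Σ_x P(x)·|φ(x)|, i.e., the expected length is at most the P-expectation of the Q-information. -/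
/-- Converse core inequality: if `Q(x) ≤ P(D_{|φ(x)|})/K^{|φ(x)|}` for all `x`, then the
expected length is at most the `P`-expectation of the `Q`-information. -/
theorem stmt_5 {X : Type*} [Fintype X] (P Q : X → ℝ) (K : ℕ) (hK : 2 ≤ K)
    (hP0 : ∀ x, 0 ≤ P x) (hP1 : ∑ x, P x = 1)
    (hQpos : ∀ x, 0 < P x → 0 < Q x) (hQle : ∀ x, Q x ≤ P x)
    (ℓ : X → ℕ)
    (hcond : ∀ x, Q x ≤ (∑ y ∈ Finset.univ.filter (fun y => ℓ y = ℓ x), P y)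
        / (K : ℝ) ^ (ℓ x)) :
    ∑ x, P x * (ℓ x : ℝ) ≤ ∑ x, P x * Real.logb K (1 / Q x) := by
  have hK1 : (1 : ℝ) < K := by exact_mod_cast Nat.lt_of_lt_of_le one_lt_two hK
  have hKpos : (0 : ℝ) < K := lt_trans one_pos hK1
  apply Finset.sum_le_sum
  intro x _
  rcases eq_or_lt_of_le (hP0 x) with h0 | hpx
  · simp [← h0]
  have hQx : 0 < Q x := hQpos x hpx
  have hPD : (∑ y ∈ Finset.univ.filter (fun y => ℓ y = ℓ x), P y) ≤ 1 := by
    rw [← hP1]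
    exact Finset.sum_le_sum_of_subset_of_nonneg (Finset.filter_subset _ _)
      (fun y _ _ => hP0 y)
  have hQle' : Q x ≤ 1 / (K : ℝ) ^ (ℓ x) := by
    refine le_trans (hcond x) ?_
    gcongr
  have hinv : (K : ℝ) ^ (ℓ x) ≤ 1 / Q x := by
    rw [le_div_iff₀ hQx]
    calc (K : ℝ) ^ (ℓ x) * Q x ≤ (K : ℝ) ^ (ℓ x) * (1 / (K : ℝ) ^ (ℓ x)) :=
          mul_le_mul_of_nonneg_left hQle' (le_of_lt (pow_pos hKpos _))
      _ = 1 := by field_simp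
  have hlog : (ℓ x : ℝ) ≤ Real.logb K (1 / Q x) := by
    have h1 : Real.logb K ((K:ℝ) ^ (ℓ x)) ≤ Real.logb K (1 / Q x) :=
      Real.logb_le_logb_of_le hK1 (pow_pos hKpos _) hinv
    rwa [Real.logb_pow, Real.logb_self_eq_one hK1, mul_one] at h1
  exact mul_le_mul_of_nonneg_left hlog (le_of_lt hpx)
end
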